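/- Let L ≥ 1 be an integer, let p be as in the explicit parallel-tempering construction, and define the bottleneck ratio B = min over k ∈ {1,…,m} of Π_{i=1}^{L} min{1, p(i−1,k)/p(i,k)}. Then B > 1/(L+1)⁷. -/

import Mathlib

/-- The unnormalized weight `N(i,k) = γ^(2(i+1)k − k² + 1) + Σ_{r=0}^{L} γ^((2r+1)(i+1) − r² − r)`
with `γ = (L+1)³`, of the explicit parallel-tempering construction. -/
noncomputable def NPT (L i k : ℕ) : ℝ :=
  (((L : ℝ) + 1) ^ 3) ^ (2 * ((i : ℤ) + 1) * (k : ℤ) - (k : ℤ) ^ 2 + 1) +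
    ∑ r ∈ Finset.range (L + 1),
      (((L : ℝ) + 1) ^ 3) ^ ((2 * (r : ℤ) + 1) * ((i : ℤ) + 1) - (r : ℤ) ^ 2 - (r : ℤ))

/-- `p(i,k) = N(i,k) / Σ_{h=1}^{m} N(i,h)` with `m = L+1`: the probability vector of the
explicit parallel-tempering construction. -/
noncomputable def pPT (L i k : ℕ) : ℝ := NPT L i k / ∑ h ∈ Finset.Icc 1 (L + 1), NPT L i h

namespace Stmt12

noncomputable def g (L : ℕ) : ℝ := ((L:ℝ)+1)^3

noncomputable def sig (L i : ℕ) : ℝ :=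
  ∑ r ∈ Finset.range (L+1), g L ^ (-(((r:ℤ))-(i:ℤ))*(((r:ℤ))-(i:ℤ)-1))

noncomputable def pii (L i : ℕ) : ℝ :=
  ∑ r ∈ Finset.range (L+1), g L ^ (-(((r:ℤ))-(i:ℤ))^2)

noncomputable def nn (L i k : ℕ) : ℝ := g L ^ ((1 : ℤ) - ((k:ℤ)-(i:ℤ)-1)^2) + sig L i

noncomputable def dd (L i : ℕ) : ℝ := pii L i + ((L:ℝ)+1) * sig L i / g L

variable {L : ℕ}

lemma g_pos : 0 < g L := by unfold g; positivity

lemma g_ne : g L ≠ 0 := g_pos.ne'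

lemma one_le_g : (1:ℝ) ≤ g L := by
  have h : (1:ℝ) ≤ (L:ℝ)+1 := by
    have : (0:ℝ) ≤ (L:ℝ) := Nat.cast_nonneg L
    linarith
  unfold g
  calc (1:ℝ) = 1^3 := by norm_num
  _ ≤ ((L:ℝ)+1)^3 := by gcongr

lemma eight_le_g (hL : 1 ≤ L) : (8:ℝ) ≤ g L := by
  have : (2:ℝ) ≤ (L:ℝ)+1 := by
    have : (1:ℝ) ≤ (L:ℝ) := by exact_mod_cast hL
    linarith
  unfold g
  calc (8:ℝ) = 2^3 := by norm_num
  _ ≤ ((L:ℝ)+1)^3 := by gcongr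

lemma m_le_g : ((L:ℝ)+1) ≤ g L := by
  have h1 : (1:ℝ) ≤ (L:ℝ)+1 := by
    have : (0:ℝ) ≤ (L:ℝ) := Nat.cast_nonneg L
    linarith
  unfold g
  calc ((L:ℝ)+1) = ((L:ℝ)+1)^1 := by ring
  _ ≤ ((L:ℝ)+1)^3 := pow_le_pow_right₀ h1 (by norm_num)

lemma N_eq (i k : ℕ) : NPT L i k = g L ^ (((i:ℤ)+1)^2) * nn L i k := by
  unfold NPT nn sig
  rw [mul_add (g L ^ (((i:ℤ)+1)^2)), Finset.mul_sum]
  show _ = g L ^ _ * g L ^ _ + ∑ r ∈ Finset.range (L+1), g L ^ _ * g L ^ _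
  congr 1
  · rw [← zpow_add₀ g_ne]
    show g L ^ _ = _
    congr 1; ring
  · apply Finset.sum_congr rfl
    intro r _
    rw [← zpow_add₀ g_ne]
    show g L ^ _ = _
    congr 1; ring

lemma D_eq (i : ℕ) :
    (∑ h ∈ Finset.Icc 1 (L+1), NPT L i h) = g L ^ (((i:ℤ)+1)^2 + 1) * dd L i := by
  have hIcc : Finset.Icc 1 (L+1) = Finset.Ico 1 (L+2) := by
    exact (Finset.Ico_add_one_right_eq_Icc 1 (L+1)).symm
  have key : (∑ h ∈ Finset.Icc 1 (L+1), g L ^ ((1:ℤ) - ((h:ℤ)-(i:ℤ)-1)^2))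
      = g L * pii L i := by
    rw [hIcc, Finset.sum_Ico_eq_sum_range]
    have h2 : L + 2 - 1 = L + 1 := by omega
    rw [h2]
    unfold pii
    rw [Finset.mul_sum]
    apply Finset.sum_congr rfl
    intro r _
    rw [show g L * g L ^ (-(((r:ℤ))-(i:ℤ))^2) = g L ^ ((1:ℤ) + (-(((r:ℤ))-(i:ℤ))^2)) by
      rw [zpow_add₀ g_ne, zpow_one]]
    congr 1
    push_cast
    ring
  have hcard : (Finset.Icc 1 (L+1)).card = L + 1 := by
    rw [Nat.card_Icc]; omega
  calc (∑ h ∈ Finset.Icc 1 (L+1), NPT L i h)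
      = ∑ h ∈ Finset.Icc 1 (L+1), g L ^ (((i:ℤ)+1)^2) * nn L i h := by
        apply Finset.sum_congr rfl; intro h _; exact N_eq i h
    _ = g L ^ (((i:ℤ)+1)^2) * ∑ h ∈ Finset.Icc 1 (L+1), nn L i h := by
        rw [Finset.mul_sum]
    _ = g L ^ (((i:ℤ)+1)^2) * ((∑ h ∈ Finset.Icc 1 (L+1), g L ^ ((1:ℤ) - ((h:ℤ)-(i:ℤ)-1)^2))
          + ((L:ℝ)+1) * sig L i) := by
        congr 1
        unfold nn
        rw [Finset.sum_add_distrib, Finset.sum_const, hcard, nsmul_eq_mul,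
          Nat.cast_add, Nat.cast_one]
    _ = g L ^ (((i:ℤ)+1)^2 + 1) * dd L i := by
        have h : g L * pii L i + ((L:ℝ)+1) * sig L i = g L * dd L i := by
          unfold dd
          rw [mul_add, mul_comm (g L) (pii L i), mul_div_cancel₀ _ g_ne]
        rw [key, h, zpow_add₀ g_ne, zpow_one]
        ring

lemma sig_pos (i : ℕ) : 0 < sig L i := by
  unfold sig
  apply Finset.sum_pos
  · intro r _
    exact zpow_pos g_pos _
  · exact Finset.nonempty_range_add_one

lemma pii_pos (i : ℕ) : 0 < pii L i := by
  unfold pii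
  apply Finset.sum_pos
  · intro r _
    exact zpow_pos g_pos _
  · exact Finset.nonempty_range_add_one

lemma nn_pos (i k : ℕ) : 0 < nn L i k := by
  unfold nn
  have h1 := sig_pos (L := L) i
  have h2 : (0:ℝ) < g L ^ ((1 : ℤ) - ((k:ℤ)-(i:ℤ)-1)^2) := zpow_pos g_pos _
  linarith

lemma dd_pos (i : ℕ) : 0 < dd L i := by
  unfold dd
  have h1 := pii_pos (L := L) i
  have h2 := sig_pos (L := L) i
  have h3 := g_pos (L := L)
  have : 0 < ((L:ℝ)+1) := by positivity
  have : 0 < ((L:ℝ)+1) * sig L i / g L := by positivity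
  linarith

lemma p_eq (i k : ℕ) : pPT L i k = nn L i k / (g L * dd L i) := by
  unfold pPT
  rw [N_eq, D_eq, zpow_add₀ g_ne, zpow_one]
  rw [show g L ^ (((i:ℤ)+1)^2) * nn L i k = nn L i k * g L ^ (((i:ℤ)+1)^2) by ring,
      show g L ^ (((i:ℤ)+1)^2) * g L * dd L i = (g L * dd L i) * g L ^ (((i:ℤ)+1)^2) by ring]
  rw [mul_div_mul_right _ _ (zpow_ne_zero _ g_ne)]

lemma p_pos (i k : ℕ) : 0 < pPT L i k := by
  rw [p_eq]
  exact div_pos (nn_pos i k) (mul_pos g_pos (dd_pos i))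


lemma ginv_nonneg : (0:ℝ) ≤ (g L)⁻¹ := inv_nonneg.mpr g_pos.le

lemma gg_inv : g L * (g L)⁻¹ = 1 := mul_inv_cancel₀ g_ne

lemma ginv_le_eighth (hL : 1 ≤ L) : (g L)⁻¹ ≤ 1/8 := by
  have h8 := eight_le_g (L := L) hL
  have := gg_inv (L := L)
  have h0 := ginv_nonneg (L := L)
  nlinarith

lemma zpow_le_ginv {e : ℤ} (he : e ≤ -1) : g L ^ e ≤ (g L)⁻¹ := by
  calc g L ^ e ≤ g L ^ (-1:ℤ) := zpow_le_zpow_right₀ one_le_g he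
  _ = (g L)⁻¹ := zpow_neg_one (g L)

lemma zpow_le_ginv2 {e : ℤ} (he : e ≤ -2) : g L ^ e ≤ (g L)⁻¹ * (g L)⁻¹ := by
  calc g L ^ e ≤ g L ^ (-2:ℤ) := zpow_le_zpow_right₀ one_le_g he
  _ = (g L)⁻¹ * (g L)⁻¹ := by
      rw [show (-2:ℤ) = (-1) + (-1) by norm_num, zpow_add₀ g_ne, zpow_neg_one]

lemma zpow_le_one' {e : ℤ} (he : e ≤ 0) : g L ^ e ≤ 1 := by
  calc g L ^ e ≤ g L ^ (0:ℤ) := zpow_le_zpow_right₀ one_le_g he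
  _ = 1 := zpow_zero _

lemma m_ginv_le : ((L:ℝ)+1) * (g L)⁻¹ ≤ 1 := by
  have h := m_le_g (L := L)
  have h2 := gg_inv (L := L)
  have h0 := ginv_nonneg (L := L)
  nlinarith

lemma m_ginv_le_quarter (hL : 1 ≤ L) : ((L:ℝ)+1) * (g L)⁻¹ ≤ 1/4 := by
  have hx : (2:ℝ) ≤ (L:ℝ)+1 := by
    have : (1:ℝ) ≤ (L:ℝ) := by exact_mod_cast hL
    linarith
  have h4 : 4*((L:ℝ)+1) ≤ g L := by
    unfold g
    nlinarith [sq_nonneg ((L:ℝ)+1-2), sq_nonneg ((L:ℝ)+1)]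
  have h2 := gg_inv (L := L)
  have h0 := ginv_nonneg (L := L)
  nlinarith

lemma sig_ge_one (i : ℕ) (hi : i ≤ L) : 1 ≤ sig L i := by
  have hmem : i ∈ Finset.range (L+1) := Finset.mem_range.mpr (by omega)
  have h := Finset.single_le_sum
    (f := fun r : ℕ => g L ^ (-(((r:ℤ))-(i:ℤ))*(((r:ℤ))-(i:ℤ)-1)))
    (fun r _ => le_of_lt (zpow_pos g_pos _)) hmem
  have he : (1:ℝ) = g L ^ (-(((i:ℤ))-(i:ℤ))*(((i:ℤ))-(i:ℤ)-1)) := by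
    rw [show (-(((i:ℤ))-(i:ℤ))*(((i:ℤ))-(i:ℤ)-1)) = 0 by ring, zpow_zero]
  exact he.le.trans h

lemma sig_ge_two (i : ℕ) (hi : i + 1 ≤ L) : 2 ≤ sig L i := by
  have hsub : ({i, i+1} : Finset ℕ) ⊆ Finset.range (L+1) := by
    intro x hx
    simp only [Finset.mem_insert, Finset.mem_singleton] at hx
    rcases hx with rfl | rfl <;> exact Finset.mem_range.mpr (by omega)
  have h := Finset.sum_le_sum_of_subset_of_nonneg
    (f := fun r : ℕ => g L ^ (-(((r:ℤ))-(i:ℤ))*(((r:ℤ))-(i:ℤ)-1))) hsub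
    (fun r _ _ => le_of_lt (zpow_pos (g_pos (L := L)) _))
  refine le_trans ?_ h
  rw [Finset.sum_pair (by omega : i ≠ i+1)]
  have e1 : (-(((i:ℤ))-(i:ℤ))*(((i:ℤ))-(i:ℤ)-1)) = 0 := by ring
  have e2 : (-((((i+1:ℕ)):ℤ)-(i:ℤ))*((((i+1:ℕ)):ℤ)-(i:ℤ)-1)) = 0 := by push_cast; ring
  rw [e1, e2, zpow_zero]
  norm_num

lemma sum_ind_le (j : ℕ) : (∑ r ∈ Finset.range (L+1), if r = j then (1:ℝ) else 0) ≤ 1 := by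
  rw [Finset.sum_ite_eq' (Finset.range (L+1)) j (fun _ => (1:ℝ))]
  split <;> norm_num

lemma sum_ind_nonneg (j : ℕ) :
    (0:ℝ) ≤ (∑ r ∈ Finset.range (L+1), if r = j then (1:ℝ) else 0) := by
  apply Finset.sum_nonneg; intro r _; split <;> norm_num

lemma card_smul_ginv2 : (L+1) • ((g L)⁻¹ * (g L)⁻¹) ≤ (g L)⁻¹ := by
  rw [nsmul_eq_mul]
  have h1 := m_ginv_le (L := L)
  have h0 := ginv_nonneg (L := L)
  have hc : (((L+1:ℕ)):ℝ) = (L:ℝ)+1 := by push_cast; ring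
  rw [hc, mul_comm ((g L)⁻¹) ((g L)⁻¹), ← mul_assoc]
  nlinarith

lemma sig_le (i : ℕ) : sig L i ≤ 2 + (g L)⁻¹ := by
  unfold sig
  have h0 := ginv_nonneg (L := L)
  have hbd : ∀ r ∈ Finset.range (L+1),
      g L ^ (-(((r:ℤ))-(i:ℤ))*(((r:ℤ))-(i:ℤ)-1)) ≤
      (g L)⁻¹ * (g L)⁻¹ + ((if r = i then (1:ℝ) else 0) + (if r = i+1 then (1:ℝ) else 0)) := by
    intro r _
    by_cases h1 : r = i
    · have he : (-(((r:ℤ))-(i:ℤ))*(((r:ℤ))-(i:ℤ)-1)) = 0 := by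
        subst h1; ring
      rw [he, zpow_zero, if_pos h1]
      have : (0:ℝ) ≤ (if r = i+1 then (1:ℝ) else 0) := by split <;> norm_num
      nlinarith
    · by_cases h2 : r = i+1
      · have he : (-(((r:ℤ))-(i:ℤ))*(((r:ℤ))-(i:ℤ)-1)) = 0 := by
          have : (r:ℤ) = (i:ℤ)+1 := by exact_mod_cast congrArg (Nat.cast (R := ℤ)) h2
          rw [this]; ring
        rw [he, zpow_zero, if_neg h1, if_pos h2]
        nlinarith
      · have hu : ((r:ℤ)-(i:ℤ)) ≤ -1 ∨ 2 ≤ ((r:ℤ)-(i:ℤ)) := by omega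
        have he : (-(((r:ℤ))-(i:ℤ))*(((r:ℤ))-(i:ℤ)-1)) ≤ -2 := by
          rcases hu with h | h <;> nlinarith
        have hz := zpow_le_ginv2 (L := L) he
        rw [if_neg h1, if_neg h2]
        nlinarith
  have h := Finset.sum_le_sum hbd
  refine le_trans h ?_
  rw [Finset.sum_add_distrib, Finset.sum_add_distrib, Finset.sum_const, Finset.card_range]
  have e1 := sum_ind_le (L := L) i
  have e2 := sum_ind_le (L := L) (i+1)
  have e3 := card_smul_ginv2 (L := L)
  linarith

lemma sig_shift (i : ℕ) :
    sig L i = sig L (i+1) + g L ^ (-(((L:ℤ))-(i:ℤ))*(((L:ℤ))-(i:ℤ)-1))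
      - g L ^ (-((i:ℤ)+1)*((i:ℤ)+2)) := by
  set F : ℕ → ℝ := fun r : ℕ => g L ^ (-(((r:ℤ))-(i:ℤ)-1)*(((r:ℤ))-(i:ℤ)-2)) with hF
  have key : sig L i = ∑ r ∈ Finset.range (L+1), F (r+1) := by
    unfold sig
    apply Finset.sum_congr rfl
    intro r _
    simp only [hF]
    congr 1
    push_cast
    ring
  have h1 : ∑ r ∈ Finset.range (L+2), F r = (∑ r ∈ Finset.range (L+1), F (r+1)) + F 0 :=
    Finset.sum_range_succ' F (L+1)
  have h2 : ∑ r ∈ Finset.range (L+2), F r = (∑ r ∈ Finset.range (L+1), F r) + F (L+1) :=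
    Finset.sum_range_succ F (L+1)
  have h3 : (∑ r ∈ Finset.range (L+1), F r) = sig L (i+1) := by
    unfold sig
    apply Finset.sum_congr rfl
    intro r _
    simp only [hF]
    congr 1
    push_cast
    ring
  have h4 : F (L+1) = g L ^ (-(((L:ℤ))-(i:ℤ))*(((L:ℤ))-(i:ℤ)-1)) := by
    simp only [hF]
    congr 1
    push_cast
    ring
  have h5 : F 0 = g L ^ (-((i:ℤ)+1)*((i:ℤ)+2)) := by
    simp only [hF]
    congr 1
    push_cast
    ring
  rw [key]
  have hsum : (∑ r ∈ Finset.range (L+1), F (r+1)) = sig L (i+1) + F (L+1) - F 0 := by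
    rw [← h3]
    linarith [h1, h2]
  rw [hsum, h4, h5]

lemma pii_ge_one (i : ℕ) (hi : i ≤ L) : 1 ≤ pii L i := by
  have hmem : i ∈ Finset.range (L+1) := Finset.mem_range.mpr (by omega)
  have h := Finset.single_le_sum
    (f := fun r : ℕ => g L ^ (-(((r:ℤ))-(i:ℤ))^2))
    (fun r _ => le_of_lt (zpow_pos g_pos _)) hmem
  have he : (1:ℝ) = g L ^ (-(((i:ℤ))-(i:ℤ))^2) := by
    rw [show (-(((i:ℤ))-(i:ℤ))^2) = 0 by ring, zpow_zero]
  exact he.le.trans h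

lemma pii_le (i : ℕ) : pii L i ≤ 1 + 3 * (g L)⁻¹ := by
  unfold pii
  have h0 := ginv_nonneg (L := L)
  have hbd : ∀ r ∈ Finset.range (L+1),
      g L ^ (-(((r:ℤ))-(i:ℤ))^2) ≤
      (g L)⁻¹ * (g L)⁻¹ + ((if r = i then (1:ℝ) else 0)
        + ((if r = i+1 then (1:ℝ) else 0) + (if r = i-1 then (1:ℝ) else 0)) * (g L)⁻¹) := by
    intro r _
    have hnn1 : (0:ℝ) ≤ (if r = i+1 then (1:ℝ) else 0) := by split <;> norm_num
    have hnn2 : (0:ℝ) ≤ (if r = i-1 then (1:ℝ) else 0) := by split <;> norm_num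
    by_cases h1 : r = i
    · have he : (-(((r:ℤ))-(i:ℤ))^2) = 0 := by subst h1; ring
      rw [he, zpow_zero, if_pos h1]
      nlinarith
    · by_cases h2 : r = i+1
      · have he : (-(((r:ℤ))-(i:ℤ))^2) = -1 := by
          have : (r:ℤ) = (i:ℤ)+1 := by exact_mod_cast congrArg (Nat.cast (R := ℤ)) h2
          rw [this]; ring
        have hz := zpow_le_ginv (L := L) (le_of_eq he)
        rw [if_neg h1, if_pos h2]
        nlinarith
      · by_cases h3 : r + 1 = i
        · have h3' : r = i-1 := by omega
          have he : (-(((r:ℤ))-(i:ℤ))^2) = -1 := by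
            have : (i:ℤ) = (r:ℤ)+1 := by exact_mod_cast congrArg (Nat.cast (R := ℤ)) h3.symm
            rw [this]; ring
          have hz := zpow_le_ginv (L := L) (le_of_eq he)
          rw [if_neg h1, if_neg h2, if_pos h3']
          nlinarith
        · have h3' : ¬ (r = i-1) := by omega
          have hu : ((r:ℤ)-(i:ℤ)) ≤ -2 ∨ 2 ≤ ((r:ℤ)-(i:ℤ)) := by omega
          have he : (-(((r:ℤ))-(i:ℤ))^2) ≤ -2 := by
            rcases hu with h | h <;> nlinarith
          have hz := zpow_le_ginv2 (L := L) he
          rw [if_neg h1, if_neg h2, if_neg h3']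
          nlinarith
  have h := Finset.sum_le_sum hbd
  refine le_trans h ?_
  rw [Finset.sum_add_distrib, Finset.sum_add_distrib, Finset.sum_const, Finset.card_range,
    ← Finset.sum_mul, Finset.sum_add_distrib]
  have e1 := sum_ind_le (L := L) i
  have e2 := sum_ind_le (L := L) (i+1)
  have e3 := sum_ind_le (L := L) (i-1)
  have e2' := sum_ind_nonneg (L := L) (i+1)
  have e3' := sum_ind_nonneg (L := L) (i-1)
  have e4 := card_smul_ginv2 (L := L)
  nlinarith [mul_le_mul_of_nonneg_right (add_le_add e2 e3) h0,
    mul_nonneg (add_nonneg e2' e3') h0]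

lemma pii_shift (i : ℕ) :
    pii L i = pii L (i+1) + g L ^ (-(((L:ℤ))-(i:ℤ))^2) - g L ^ (-((i:ℤ)+1)^2) := by
  set F : ℕ → ℝ := fun r : ℕ => g L ^ (-(((r:ℤ))-(i:ℤ)-1)^2) with hF
  have key : pii L i = ∑ r ∈ Finset.range (L+1), F (r+1) := by
    unfold pii
    apply Finset.sum_congr rfl
    intro r _
    simp only [hF]
    congr 1
    push_cast
    ring
  have h1 : ∑ r ∈ Finset.range (L+2), F r = (∑ r ∈ Finset.range (L+1), F (r+1)) + F 0 :=
    Finset.sum_range_succ' F (L+1)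
  have h2 : ∑ r ∈ Finset.range (L+2), F r = (∑ r ∈ Finset.range (L+1), F r) + F (L+1) :=
    Finset.sum_range_succ F (L+1)
  have h3 : (∑ r ∈ Finset.range (L+1), F r) = pii L (i+1) := by
    unfold pii
    apply Finset.sum_congr rfl
    intro r _
    simp only [hF]
    congr 1
    push_cast
    ring
  have h4 : F (L+1) = g L ^ (-(((L:ℤ))-(i:ℤ))^2) := by
    simp only [hF]
    congr 1
    push_cast
    ring
  have h5 : F 0 = g L ^ (-((i:ℤ)+1)^2) := by
    simp only [hF]
    congr 1
    push_cast
    ring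
  rw [key]
  have hsum : (∑ r ∈ Finset.range (L+1), F (r+1)) = pii L (i+1) + F (L+1) - F 0 := by
    rw [← h3]
    linarith [h1, h2]
  rw [hsum, h4, h5]

lemma dd_ge_one (i : ℕ) (hi : i ≤ L) : 1 ≤ dd L i := by
  unfold dd
  have h1 := pii_ge_one (L := L) i hi
  have h2 := sig_pos (L := L) i
  have h3 := g_pos (L := L)
  have : 0 ≤ ((L:ℝ)+1) * sig L i / g L := by positivity
  linarith

lemma dd_le_two (hL : 1 ≤ L) (i : ℕ) : dd L i ≤ 2 := by
  unfold dd
  have h1 := pii_le (L := L) i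
  have h2 := sig_le (L := L) i
  have h0 := ginv_nonneg (L := L)
  have h8 := ginv_le_eighth (L := L) hL
  have hq := m_ginv_le_quarter (L := L) hL
  have hs := sig_pos (L := L) i
  have hm : (0:ℝ) ≤ (L:ℝ)+1 := by positivity
  have hdiv : ((L:ℝ)+1) * sig L i / g L = ((L:ℝ)+1) * (g L)⁻¹ * sig L i := by
    rw [div_eq_mul_inv]; ring
  rw [hdiv]
  have hms : ((L:ℝ)+1) * (g L)⁻¹ * sig L i ≤ (1/4) * (2 + (g L)⁻¹) := by
    apply mul_le_mul hq h2 (le_of_lt hs) (by norm_num)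
  nlinarith


noncomputable def cc (L i : ℕ) : ℝ := if i < L then 1 - 3*(g L)⁻¹ else 1/4

lemma cc_nonneg (hL : 1 ≤ L) (i : ℕ) : 0 ≤ cc L i := by
  unfold cc
  have h8 := ginv_le_eighth (L := L) hL
  have h0 := ginv_nonneg (L := L)
  split <;> nlinarith

lemma cc_le_one (i : ℕ) : cc L i ≤ 1 := by
  unfold cc
  have h0 := ginv_nonneg (L := L)
  split <;> nlinarith

lemma nn_ge_one (i k : ℕ) (hi : i ≤ L) : 1 ≤ nn L i k := by
  unfold nn
  have h1 := sig_ge_one (L := L) i hi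
  have h2 : (0:ℝ) < g L ^ ((1 : ℤ) - ((k:ℤ)-(i:ℤ)-1)^2) := zpow_pos g_pos _
  linarith

lemma dd_eq (i : ℕ) : dd L i = pii L i + ((L:ℝ)+1) * (g L)⁻¹ * sig L i := by
  unfold dd
  rw [div_eq_mul_inv]
  ring

lemma mgi_nonneg : (0:ℝ) ≤ ((L:ℝ)+1) * (g L)⁻¹ := by
  have := ginv_nonneg (L := L)
  have : (0:ℝ) ≤ (L:ℝ)+1 := by positivity
  positivity

lemma ratio_eq (j k : ℕ) :
    pPT L j k / pPT L (j+1) k = (nn L j k * dd L (j+1)) / (nn L (j+1) k * dd L j) := by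
  rw [p_eq, p_eq]
  have h1 := (nn_pos (L := L) j k).ne'
  have h2 := (nn_pos (L := L) (j+1) k).ne'
  have h3 := (dd_pos (L := L) j).ne'
  have h4 := (dd_pos (L := L) (j+1)).ne'
  have h5 := g_ne (L := L)
  field_simp

lemma prod_lower (n d a e c : ℝ) (hn : 1 ≤ n) (hd : 1 ≤ d) (ha : 0 ≤ a) (ha1 : a ≤ 1)
    (he0 : 0 ≤ e) (he1 : e ≤ 1) (hc : c ≤ (1-a)*(1-e)) :
    c*(n*d) ≤ (n-a)*(d-e) := by
  have h1 : n*(1-a) ≤ n - a := by nlinarith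
  have h2 : d*(1-e) ≤ d - e := by nlinarith
  have h3 : 0 ≤ d*(1-e) := by nlinarith
  have h4 : 0 ≤ n - a := by nlinarith
  have h5 : (n*(1-a))*(d*(1-e)) ≤ (n-a)*(d-e) := mul_le_mul h1 h2 h3 h4
  have h6 : c*(n*d) ≤ ((1-a)*(1-e))*(n*d) :=
    mul_le_mul_of_nonneg_right hc (by nlinarith)
  nlinarith

lemma prod_upper (n d a e : ℝ) (hn : 1 ≤ n) (hd : 1 ≤ d) (ha : 0 ≤ a) (he0 : 0 ≤ e) :
    (n+a)*(d+e) ≤ ((1+a)*(1+e))*(n*d) := by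
  have h1 : n + a ≤ n*(1+a) := by nlinarith
  have h2 : d + e ≤ d*(1+e) := by nlinarith
  have h5 : (n+a)*(d+e) ≤ (n*(1+a))*(d*(1+e)) :=
    mul_le_mul h1 h2 (by nlinarith) (by nlinarith)
  nlinarith

set_option maxHeartbeats 1000000 in
/-- Case A core: for `k ≤ j+1 ≤ L`,
`cc L (j+1) * (nn L (j+1) k * dd L j) ≤ nn L j k * dd L (j+1)`. -/
lemma coreA (hL : 1 ≤ L) (j k : ℕ) (hjL : j+1 ≤ L) (hkj : k ≤ j+1) :
    cc L (j+1) * (nn L (j+1) k * dd L j) ≤ nn L j k * dd L (j+1) := by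
  have h0' := ginv_nonneg (L := L)
  have h8' := ginv_le_eighth (L := L) hL
  have hq' := m_ginv_le_quarter (L := L) hL
  set gi := (g L)⁻¹ with hgi
  clear_value gi
  have h0 : 0 ≤ gi := h0'
  have h8 : gi ≤ 1/8 := h8'
  have hq : ((L:ℝ)+1) * gi ≤ 1/4 := hq'
  have hm0 : (0:ℝ) ≤ ((L:ℝ)+1) * gi := by
    have : (0:ℝ) ≤ (L:ℝ)+1 := by positivity
    nlinarith
  have hw : ((k:ℤ)-(j:ℤ)-1) ≤ 0 := by
    have : (k:ℤ) ≤ (j:ℤ)+1 := by exact_mod_cast hkj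
    linarith
  have hp : g L ^ ((1:ℤ) - ((k:ℤ)-((j:ℤ)+1)-1)^2) ≤ g L ^ ((1:ℤ) - ((k:ℤ)-(j:ℤ)-1)^2) := by
    apply zpow_le_zpow_right₀ one_le_g
    nlinarith
  have hU : g L ^ (-((j:ℤ)+1)*((j:ℤ)+2)) ≤ gi * gi := by
    rw [hgi]
    apply zpow_le_ginv2
    have : (0:ℤ) ≤ (j:ℤ) := Int.natCast_nonneg j
    nlinarith
  have hsig := sig_shift (L := L) j
  have hT0 : (0:ℝ) ≤ g L ^ (-(((L:ℤ))-(j:ℤ))*(((L:ℤ))-(j:ℤ)-1)) := le_of_lt (zpow_pos g_pos _)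
  have hnj : nn L (j+1) k - gi*gi ≤ nn L j k := by
    unfold nn
    push_cast
    have hs : sig L (j+1) - gi*gi ≤ sig L j := by
      have := zpow_pos (g_pos (L := L)) (-(((L:ℤ))-(j:ℤ))*(((L:ℤ))-(j:ℤ)-1))
      linarith [hsig, hU]
    push_cast at hp
    linarith [hp, hs]
  set TT := g L ^ (-(((L:ℤ))-(j:ℤ))*(((L:ℤ))-(j:ℤ)-1)) with hTT
  clear_value TT
  have hLj1 : (1:ℤ) ≤ (L:ℤ)-(j:ℤ) := by
    have : (j:ℤ)+1 ≤ (L:ℤ) := by exact_mod_cast hjL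
    linarith
  have hpiL : g L ^ (-(((L:ℤ))-(j:ℤ))^2) ≤ gi := by
    rw [hgi]
    apply zpow_le_ginv
    nlinarith
  have hpii := pii_shift (L := L) j
  have hdj : dd L j - (gi + (((L:ℝ)+1) * gi) * TT) ≤ dd L (j+1) := by
    rw [dd_eq, dd_eq, ← hgi]
    have hs : sig L j ≤ sig L (j+1) + TT := by
      have := zpow_pos (g_pos (L := L)) (-((j:ℤ)+1)*((j:ℤ)+2))
      linarith [hsig]
    have hpi : pii L j ≤ pii L (j+1) + gi := by
      have := zpow_pos (g_pos (L := L)) (-((j:ℤ)+1)^2)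
      linarith [hpii, hpiL]
    have hmul : ((L:ℝ)+1) * gi * sig L j ≤ ((L:ℝ)+1) * gi * sig L (j+1)
        + (((L:ℝ)+1) * gi) * TT := by
      nlinarith [mul_le_mul_of_nonneg_left hs hm0]
    linarith
  set EB := gi + (((L:ℝ)+1) * gi) * TT with hEB
  clear_value EB
  have hn1 : 1 ≤ nn L (j+1) k := nn_ge_one (j+1) k hjL
  have hd1 : 1 ≤ dd L j := dd_ge_one j (by omega)
  have hTT1 : TT ≤ 1 := by
    rw [hTT]
    apply zpow_le_one'
    nlinarith
  have hEB0 : 0 ≤ EB := by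
    rw [hEB]
    nlinarith [mul_nonneg hm0 hT0]
  have hEB1 : EB ≤ 3/8 := by
    rw [hEB]
    nlinarith [mul_le_mul hq hTT1 hT0 (by norm_num : (0:ℝ) ≤ 1/4)]
  have step1 : (nn L (j+1) k - gi*gi)*(dd L j - EB) ≤ nn L j k * dd L (j+1) := by
    apply mul_le_mul hnj hdj
    · linarith
    · have := nn_pos (L := L) j k
      linarith
  refine le_trans ?_ step1
  by_cases hcase : j+1 < L
  · have hTTs : TT ≤ gi*gi := by
      rw [hTT, hgi]
      apply zpow_le_ginv2
      have h2Lj : (2:ℤ) ≤ (L:ℤ)-(j:ℤ) := by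
        have : (j:ℤ)+2 ≤ (L:ℤ) := by exact_mod_cast hcase
        linarith
      nlinarith
    have hEB2 : EB ≤ 2*gi := by
      rw [hEB]
      nlinarith [mul_le_mul hq hTTs (by nlinarith : (0:ℝ) ≤ TT) (by norm_num : (0:ℝ) ≤ 1/4)]
    have hccv : cc L (j+1) = 1 - 3*gi := by unfold cc; rw [if_pos hcase, hgi]
    rw [hccv]
    refine prod_lower _ _ _ _ _ hn1 hd1 ?_ ?_ hEB0 ?_ ?_ <;> nlinarith
  · have hccv : cc L (j+1) = 1/4 := by unfold cc; rw [if_neg hcase]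
    rw [hccv]
    refine prod_lower _ _ _ _ _ hn1 hd1 ?_ ?_ hEB0 ?_ ?_ <;> nlinarith

set_option maxHeartbeats 1000000 in
/-- Case B core: for `j+2 ≤ k ≤ L+1`, `j+1 ≤ L`,
`cc L (j+1) * (nn L j k * dd L (j+1)) ≤ nn L (j+1) k * dd L j`. -/
lemma coreB (hL : 1 ≤ L) (j k : ℕ) (hjL : j+1 ≤ L) (hkj : j+2 ≤ k) (hkm : k ≤ L+1) :
    cc L (j+1) * (nn L j k * dd L (j+1)) ≤ nn L (j+1) k * dd L j := by
  have h0' := ginv_nonneg (L := L)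
  have h8' := ginv_le_eighth (L := L) hL
  have hm1' := m_ginv_le (L := L)
  set gi := (g L)⁻¹ with hgi
  clear_value gi
  have h0 : 0 ≤ gi := h0'
  have h8 : gi ≤ 1/8 := h8'
  have hm1 : ((L:ℝ)+1) * gi ≤ 1 := hm1'
  have hm0 : (0:ℝ) ≤ ((L:ℝ)+1) * gi := by
    have : (0:ℝ) ≤ (L:ℝ)+1 := by positivity
    nlinarith
  have hsig := sig_shift (L := L) j
  have hpii := pii_shift (L := L) j
  have hU : g L ^ (-((j:ℤ)+1)*((j:ℤ)+2)) ≤ gi * gi := by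
    rw [hgi]
    apply zpow_le_ginv2
    have : (0:ℤ) ≤ (j:ℤ) := Int.natCast_nonneg j
    nlinarith
  have hpj1 : g L ^ (-((j:ℤ)+1)^2) ≤ gi := by
    rw [hgi]
    apply zpow_le_ginv
    have : (0:ℤ) ≤ (j:ℤ) := Int.natCast_nonneg j
    nlinarith
  have hn1 : 1 ≤ nn L (j+1) k := nn_ge_one (j+1) k hjL
  have hd1 : 1 ≤ dd L j := dd_ge_one j (by omega)
  have hddj1 : 0 < dd L (j+1) := dd_pos (j+1)
  by_cases hcase : j+1 < L
  · -- generic subcase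
    have hw : (1:ℤ) ≤ (k:ℤ)-(j:ℤ)-1 := by
      have : (j:ℤ)+2 ≤ (k:ℤ) := by exact_mod_cast hkj
      linarith
    have hp : g L ^ ((1:ℤ) - ((k:ℤ)-(j:ℤ)-1)^2) ≤ g L ^ ((1:ℤ) - ((k:ℤ)-((j:ℤ)+1)-1)^2) := by
      apply zpow_le_zpow_right₀ one_le_g
      nlinarith
    have hTTs : g L ^ (-(((L:ℤ))-(j:ℤ))*(((L:ℤ))-(j:ℤ)-1)) ≤ gi*gi := by
      rw [hgi]
      apply zpow_le_ginv2
      have : (j:ℤ)+2 ≤ (L:ℤ) := by exact_mod_cast hcase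
      nlinarith
    have hnj : nn L j k ≤ nn L (j+1) k + gi*gi := by
      unfold nn
      push_cast
      push_cast at hp
      have hs : sig L j ≤ sig L (j+1) + gi*gi := by
        have := zpow_pos (g_pos (L := L)) (-((j:ℤ)+1)*((j:ℤ)+2))
        linarith [hsig, hTTs]
      linarith [hp, hs]
    have hd : dd L (j+1) ≤ dd L j + (gi + gi*gi) := by
      rw [dd_eq, dd_eq, ← hgi]
      have hTpos := zpow_pos (g_pos (L := L)) (-(((L:ℤ))-(j:ℤ))*(((L:ℤ))-(j:ℤ)-1))
      have hppos := zpow_pos (g_pos (L := L)) (-(((L:ℤ))-(j:ℤ))^2)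
      have hs : sig L (j+1) ≤ sig L j + gi*gi := by
        linarith [hsig, hU]
      have hpi : pii L (j+1) ≤ pii L j + gi := by
        linarith [hpii, hpj1]
      have hmul : ((L:ℝ)+1) * gi * sig L (j+1) ≤ ((L:ℝ)+1) * gi * sig L j + gi*gi := by
        nlinarith [mul_le_mul_of_nonneg_left hs hm0]
      linarith
    have hccv : cc L (j+1) = 1 - 3*gi := by unfold cc; rw [if_pos hcase, hgi]
    rw [hccv]
    have hstep : nn L j k * dd L (j+1) ≤
        ((1+gi*gi)*(1+(gi+gi*gi))) * (nn L (j+1) k * dd L j) := by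
      have h1 : nn L j k * dd L (j+1) ≤ (nn L (j+1) k + gi*gi) * (dd L j + (gi+gi*gi)) := by
        apply mul_le_mul hnj hd (le_of_lt hddj1)
        nlinarith
      refine le_trans h1 ?_
      exact prod_upper _ _ _ _ hn1 hd1 (by nlinarith) (by nlinarith)
    have hccK : (1-3*gi) * ((1+gi*gi)*(1+(gi+gi*gi))) ≤ 1 := by
      nlinarith [mul_nonneg h0 h0, mul_nonneg (mul_nonneg h0 h0) h0,
        mul_nonneg (mul_nonneg (mul_nonneg h0 h0) h0) h0,
        mul_nonneg (mul_nonneg (mul_nonneg (mul_nonneg h0 h0) h0) h0) h0]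
    have hB0 : (0:ℝ) ≤ nn L (j+1) k * dd L j := by nlinarith
    have hcc0 : (0:ℝ) ≤ 1 - 3*gi := by nlinarith
    nlinarith [mul_le_mul_of_nonneg_left hstep hcc0,
      mul_le_mul_of_nonneg_right hccK hB0]
  · -- top subcase : j+1 = L, k = L+1
    have hjL' : j+1 = L := by omega
    have hk' : k = L+1 := by omega
    have he0 : (1:ℤ) - ((k:ℤ)-(j:ℤ)-1)^2 = 0 := by
      have : (k:ℤ) = (j:ℤ)+2 := by
        have : (k:ℕ) = j+2 := by omega
        exact_mod_cast congrArg (Nat.cast (R := ℤ)) this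
      rw [this]; ring
    have he1 : (1:ℤ) - ((k:ℤ)-((j:ℤ)+1)-1)^2 = 1 := by
      have : (k:ℤ) = ((j:ℤ)+1)+1 := by
        have : (k:ℕ) = (j+1)+1 := by omega
        exact_mod_cast congrArg (Nat.cast (R := ℤ)) this
      rw [this]; ring
    have hnj4 : nn L j k ≤ 4 := by
      unfold nn
      push_cast
      push_cast at he0
      rw [he0, zpow_zero]
      have := sig_le (L := L) j
      rw [← hgi] at this
      linarith
    have hnn : g L ≤ nn L (j+1) k := by
      unfold nn
      push_cast
      push_cast at he1
      rw [he1, zpow_one]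
      have := sig_pos (L := L) (j+1)
      linarith
    have hdd2 : dd L (j+1) ≤ 2 := dd_le_two hL (j+1)
    have hg8 := eight_le_g (L := L) hL
    have hccv : cc L (j+1) = 1/4 := by unfold cc; rw [if_neg hcase]
    rw [hccv]
    have hnj0 : 0 < nn L j k := nn_pos j k
    nlinarith [mul_le_mul hnj4 hdd2 (le_of_lt hddj1) (by norm_num : (0:ℝ) ≤ 4),
      mul_le_mul hnn hd1 (by norm_num) (by linarith : (0:ℝ) ≤ nn L (j+1) k)]

lemma factorA (hL : 1 ≤ L) (j k : ℕ) (hjL : j+1 ≤ L) (hkj : k ≤ j+1) :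
    cc L (j+1) ≤ min 1 (pPT L j k / pPT L (j+1) k) := by
  refine le_min (cc_le_one _) ?_
  rw [ratio_eq, le_div_iff₀ (mul_pos (nn_pos _ _) (dd_pos _))]
  exact coreA hL j k hjL hkj

lemma factorB (hL : 1 ≤ L) (j k : ℕ) (hjL : j+1 ≤ L) (hkj : j+2 ≤ k) (hkm : k ≤ L+1) :
    (pPT L j k / pPT L (j+1) k) * cc L (j+1) ≤ min 1 (pPT L j k / pPT L (j+1) k) := by
  have hr0 : 0 ≤ pPT L j k / pPT L (j+1) k :=
    le_of_lt (div_pos (p_pos j k) (p_pos (j+1) k))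
  refine le_min ?_ (mul_le_of_le_one_right hr0 (cc_le_one _))
  rw [ratio_eq, div_mul_eq_mul_div, div_le_one (mul_pos (nn_pos _ _) (dd_pos _))]
  calc nn L j k * dd L (j+1) * cc L (j+1)
      = cc L (j+1) * (nn L j k * dd L (j+1)) := by ring
    _ ≤ nn L (j+1) k * dd L j := coreB hL j k hjL hkj hkm

lemma telescope (k N : ℕ) :
    (∏ i ∈ Finset.Icc 1 N, (pPT L (i-1) k / pPT L i k)) = pPT L 0 k / pPT L N k := by
  induction N with
  | zero =>
      rw [show Finset.Icc 1 0 = (∅ : Finset ℕ) from Finset.Icc_eq_empty (by omega)]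
      rw [Finset.prod_empty, div_self (p_pos 0 k).ne']
  | succ n ih =>
      rw [Finset.prod_Icc_succ_top (by omega : 1 ≤ n+1), ih]
      have : n + 1 - 1 = n := by omega
      rw [this]
      have h1 := (p_pos (L := L) n k).ne'
      have h2 := (p_pos (L := L) (n+1) k).ne'
      field_simp

lemma q_le_one (i k : ℕ) (hk1 : 1 ≤ k) (hkm : k ≤ L+1) : pPT L i k ≤ 1 := by
  unfold pPT
  have hpos : ∀ h ∈ Finset.Icc 1 (L+1), 0 < NPT L i h := by
    intro h _
    rw [N_eq]
    exact mul_pos (zpow_pos g_pos _) (nn_pos i h)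
  have hmem : k ∈ Finset.Icc 1 (L+1) := Finset.mem_Icc.mpr ⟨hk1, hkm⟩
  apply div_le_one_of_le₀
  · exact Finset.single_le_sum (fun h hh => le_of_lt (hpos h hh)) hmem
  · exact le_of_lt (Finset.sum_pos hpos ⟨k, hmem⟩)

lemma q0_ge (hL : 1 ≤ L) (k : ℕ) : (g L)⁻¹ ≤ pPT L 0 k := by
  rw [p_eq, le_div_iff₀ (mul_pos g_pos (dd_pos 0))]
  have h1 : sig L 0 ≥ 2 := sig_ge_two 0 (by omega)
  have h2 : dd L 0 ≤ 2 := dd_le_two hL 0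
  have h3 : 1 ≤ dd L 0 := dd_ge_one 0 (by omega)
  have h4 : (g L)⁻¹ * (g L * dd L 0) = dd L 0 := by
    rw [← mul_assoc, inv_mul_cancel₀ g_ne, one_mul]
  rw [h4]
  have h5 : (0:ℝ) < g L ^ ((1:ℤ) - ((k:ℤ)-(0:ℤ)-1)^2) := zpow_pos g_pos _
  unfold nn
  push_cast
  linarith

end Stmt12

open Stmt12 in
set_option maxHeartbeats 1000000 in
/-- the bottleneck ratio
`B = min_{k ∈ {1,…,m}} Π_{i=1}^{L} min{1, p(i−1,k)/p(i,k)}` of the explicit construction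
satisfies `B > 1/(L+1)⁷`. -/
theorem stmt_12 (L : ℕ) (hL : 1 ≤ L) :
    (Finset.Icc 1 (L + 1)).inf' (by rw [Finset.nonempty_Icc]; omega)
      (fun k => ∏ i ∈ Finset.Icc 1 L, min 1 (pPT L (i - 1) k / pPT L i k)) >
      1 / ((L : ℝ) + 1) ^ 7 := by
  rw [gt_iff_lt, Finset.lt_inf'_iff]
  intro k hk
  rw [Finset.mem_Icc] at hk
  obtain ⟨hk1, hkm⟩ := hk
  have h0 := ginv_nonneg (L := L)
  have h8 := ginv_le_eighth (L := L) hL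
  -- per-factor bounds
  have key : ∀ i ∈ Finset.Icc 1 L,
      (if i < k then pPT L (i-1) k / pPT L i k else 1) * cc L i
        ≤ min 1 (pPT L (i-1) k / pPT L i k) := by
    intro i hi
    rw [Finset.mem_Icc] at hi
    obtain ⟨j, rfl⟩ : ∃ j, i = j+1 := ⟨i-1, by omega⟩
    have hj : j + 1 - 1 = j := by omega
    rw [hj]
    by_cases hik : j+1 < k
    · rw [if_pos hik]
      exact factorB hL j k (by omega) (by omega) hkm
    · rw [if_neg hik, one_mul]
      exact factorA hL j k (by omega) (by omega)
  have key0 : ∀ i ∈ Finset.Icc 1 L,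
      0 ≤ (if i < k then pPT L (i-1) k / pPT L i k else 1) * cc L i := by
    intro i _
    apply mul_nonneg _ (cc_nonneg hL i)
    split
    · exact le_of_lt (div_pos (p_pos _ _) (p_pos _ _))
    · norm_num
  have hprod := Finset.prod_le_prod key0 key
  rw [Finset.prod_mul_distrib] at hprod
  have h1 : (∏ i ∈ Finset.Icc 1 L, (if i < k then pPT L (i-1) k / pPT L i k else 1))
      = pPT L 0 k / pPT L (k-1) k := by
    rw [← Finset.prod_filter]
    have hf : (Finset.Icc 1 L).filter (fun i => i < k) = Finset.Icc 1 (k-1) := by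
      ext x
      simp only [Finset.mem_filter, Finset.mem_Icc]
      omega
    rw [hf, telescope]
  have h2 : (∏ i ∈ Finset.Icc 1 L, cc L i) = (1-3*(g L)⁻¹)^(L-1) * (1/4) := by
    have hIL : Finset.Icc 1 L = Finset.Icc 1 ((L-1)+1) := by congr 1; omega
    rw [hIL, Finset.prod_Icc_succ_top (by omega : 1 ≤ (L-1)+1)]
    have hL1 : L-1+1 = L := by omega
    rw [hL1]
    have hconst : (∏ i ∈ Finset.Icc 1 (L-1), cc L i) = (1-3*(g L)⁻¹)^(L-1) := by
      calc (∏ i ∈ Finset.Icc 1 (L-1), cc L i)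
          = ∏ _i ∈ Finset.Icc 1 (L-1), (1-3*(g L)⁻¹) := by
            apply Finset.prod_congr rfl
            intro i hi
            rw [Finset.mem_Icc] at hi
            unfold cc
            rw [if_pos (by omega)]
        _ = (1-3*(g L)⁻¹)^(L-1) := by
            rw [Finset.prod_const, Nat.card_Icc]
            norm_num
    have hccL : cc L L = 1/4 := by unfold cc; rw [if_neg (lt_irrefl L)]
    rw [hconst, hccL]
  rw [h1, h2] at hprod
  -- numeric facts
  have hq0 := q0_ge hL k
  have hqk1 : pPT L (k-1) k ≤ 1 := q_le_one (k-1) k hk1 hkm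
  have hq0pos := p_pos (L := L) 0 k
  have hqkpos := p_pos (L := L) (k-1) k
  have hdiv : pPT L 0 k ≤ pPT L 0 k / pPT L (k-1) k := by
    rw [le_div_iff₀ hqkpos]
    nlinarith
  have hpow : (5/8 : ℝ) ≤ (1-3*(g L)⁻¹)^(L-1) := by
    have hb := one_add_mul_le_pow (a := -(3*(g L)⁻¹)) (by nlinarith) (L-1)
    rw [show (1 + -(3*(g L)⁻¹)) = 1 - 3*(g L)⁻¹ by ring] at hb
    have hL1R : (1:ℝ) ≤ (L:ℝ) := by exact_mod_cast hL
    have h8L : (8:ℝ)*(L:ℝ) ≤ g L := by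
      unfold g
      nlinarith [mul_nonneg (sub_nonneg.mpr hL1R)
        (show (0:ℝ) ≤ (L:ℝ)^2+4*(L:ℝ)-1 by nlinarith)]
    have hgg := gg_inv (L := L)
    have hLgi : ((L:ℝ))*(g L)⁻¹ ≤ 1/8 := by nlinarith
    have hcast : ((L-1 : ℕ) : ℝ) ≤ (L:ℝ) := Nat.cast_le.mpr (by omega)
    have hcast0 : (0:ℝ) ≤ ((L-1 : ℕ) : ℝ) := Nat.cast_nonneg _
    nlinarith [mul_le_mul_of_nonneg_right hcast h0]
  have hx2 : (2:ℝ) ≤ (L:ℝ)+1 := by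
    have : (1:ℝ) ≤ (L:ℝ) := by exact_mod_cast hL
    linarith
  calc 1 / ((L : ℝ) + 1) ^ 7
      < (g L)⁻¹ * ((5/8)*(1/4)) := by
        have hgL : g L = ((L:ℝ)+1)^3 := rfl
        have hi : (g L)⁻¹ * ((5/8)*(1/4)) = 5 / (32 * ((L:ℝ)+1)^3) := by
          rw [hgL]
          field_simp
          ring
        rw [hi, div_lt_div_iff₀ (by positivity) (by positivity)]
        have h16 : (16:ℝ) ≤ ((L:ℝ)+1)^4 := by
          have ha : (0:ℝ) ≤ ((L:ℝ)+1)^2 - 4 := by nlinarith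
          nlinarith [mul_nonneg ha (show (0:ℝ) ≤ ((L:ℝ)+1)^2 + 4 by positivity)]
        nlinarith [pow_pos (show (0:ℝ) < (L:ℝ)+1 by linarith) 3,
          mul_le_mul_of_nonneg_left h16 (le_of_lt (pow_pos (show (0:ℝ) < (L:ℝ)+1 by linarith) 3))]
    _ ≤ pPT L 0 k * ((5/8)*(1/4)) := by
        apply mul_le_mul_of_nonneg_right hq0
        norm_num
    _ ≤ (pPT L 0 k / pPT L (k-1) k) * ((1-3*(g L)⁻¹)^(L-1) * (1/4)) := by
        apply mul_le_mul hdiv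
        · apply mul_le_mul_of_nonneg_right hpow
          norm_num
        · norm_num
        · exact le_of_lt (div_pos hq0pos hqkpos)
    _ ≤ ∏ i ∈ Finset.Icc 1 L, min 1 (pPT L (i - 1) k / pPT L i k) := hprod
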